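/- Let G and H be finite simple graphs. If the Cartesian product G □ H is well-covered, then at least one of G or H is well-covered. -/

import Mathlib

/-- A set of vertices is independent if no two of its vertices are adjacent. -/
def IsIndep {V : Type*} (G : SimpleGraph V) (s : Set V) : Prop :=
  ∀ ⦃u⦄, u ∈ s → ∀ ⦃v⦄, v ∈ s → ¬ G.Adj u v

/-- A maximal independent set: independent and contained in no strictly larger
independent set. -/
def MaxIndep {V : Type*} (G : SimpleGraph V) (s : Set V) : Prop :=
  IsIndep G s ∧ ∀ t : Set V, IsIndep G t → s ⊆ t → s = t

/-- A maximal independent set of the subgraph induced on `A`. -/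
def MaxIndepOn {V : Type*} (G : SimpleGraph V) (A : Set V) (s : Set V) : Prop :=
  s ⊆ A ∧ IsIndep G s ∧ ∀ t : Set V, t ⊆ A → IsIndep G t → s ⊆ t → s = t

/-- A graph is well-covered if every maximal independent set has the same cardinality. -/
def WellCovered {V : Type*} (G : SimpleGraph V) : Prop :=
  ∀ s t : Set V, MaxIndep G s → MaxIndep G t → s.ncard = t.ncard

/-- The closed neighborhood `N[S]`: the union of `S` with the set of all vertices
adjacent to some vertex of `S`. -/
def ClosedNbhd {V : Type*} (G : SimpleGraph V) (S : Set V) : Set V :=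
  S ∪ {v | ∃ u ∈ S, G.Adj u v}

/-- A vertex `x` is isolatable if there is an independent set `M` such that `x` is the
unique vertex lying outside `N[M]`. -/
def Isolatable {V : Type*} (G : SimpleGraph V) (x : V) : Prop :=
  ∃ M : Set V, IsIndep G M ∧ (ClosedNbhd G M)ᶜ = {x}

/-! ### Auxiliary lemmas -/

section Aux

variable {V : Type*} {G : SimpleGraph V}

lemma aux_indep_mono {s t : Set V} (h : IsIndep G s) (hts : t ⊆ s) : IsIndep G t :=
  fun _ hu _ hv => h (hts hu) (hts hv)

lemma aux_mem_closedNbhd_self {S : Set V} {v : V} (h : v ∈ S) : v ∈ ClosedNbhd G S :=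
  Or.inl h

lemma aux_mem_closedNbhd_of_adj {S : Set V} {u v : V} (hu : u ∈ S) (h : G.Adj u v) :
    v ∈ ClosedNbhd G S := Or.inr ⟨u, hu, h⟩

lemma aux_notin_closedNbhd {S : Set V} {v : V} (h : v ∉ ClosedNbhd G S) :
    v ∉ S ∧ ∀ u ∈ S, ¬ G.Adj u v := by
  constructor
  · exact fun hv => h (Or.inl hv)
  · exact fun u hu hadj => h (Or.inr ⟨u, hu, hadj⟩)

lemma aux_closedNbhd_mono {S T : Set V} (h : S ⊆ T) : ClosedNbhd G S ⊆ ClosedNbhd G T := by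
  rintro v (hv | ⟨u, hu, hadj⟩)
  · exact Or.inl (h hv)
  · exact Or.inr ⟨u, h hu, hadj⟩

/-- Characterization of maximal independent sets: independent and dominating. -/
lemma aux_maxIndep_iff {s : Set V} :
    MaxIndep G s ↔ IsIndep G s ∧ ∀ v, v ∉ s → ∃ u ∈ s, G.Adj u v := by
  constructor
  · rintro ⟨hi, hmax⟩
    refine ⟨hi, fun v hv => ?_⟩
    by_contra hno
    push_neg at hno
    have hins : IsIndep G (insert v s) := by
      intro a ha b hb hadj
      rcases ha with rfl | ha
      · rcases hb with rfl | hb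
        · exact (G.loopless.irrefl _) hadj
        · exact hno b hb hadj.symm
      · rcases hb with rfl | hb
        · exact hno a ha hadj
        · exact hi ha hb hadj
    have := hmax (insert v s) hins (Set.subset_insert _ _)
    exact hv (this ▸ Set.mem_insert v s)
  · rintro ⟨hi, hdom⟩
    refine ⟨hi, fun t hti hst => ?_⟩
    refine Set.Subset.antisymm hst (fun v hv => ?_)
    by_contra hvs
    obtain ⟨u, hu, hadj⟩ := hdom v hvs
    exact hti (hst hu) hv hadj

/-- Characterization of maximal independent sets of induced subgraphs. -/
lemma aux_maxIndepOn_iff {A s : Set V} :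
    MaxIndepOn G A s ↔ s ⊆ A ∧ IsIndep G s ∧ ∀ v ∈ A, v ∉ s → ∃ u ∈ s, G.Adj u v := by
  constructor
  · rintro ⟨hsA, hi, hmax⟩
    refine ⟨hsA, hi, fun v hvA hv => ?_⟩
    by_contra hno
    push_neg at hno
    have hins : IsIndep G (insert v s) := by
      intro a ha b hb hadj
      rcases ha with rfl | ha
      · rcases hb with rfl | hb
        · exact (G.loopless.irrefl _) hadj
        · exact hno b hb hadj.symm
      · rcases hb with rfl | hb
        · exact hno a ha hadj
        · exact hi ha hb hadj
    have : s = insert v s := by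
      refine hmax _ ?_ hins (Set.subset_insert _ _)
      intro a ha
      rcases ha with rfl | ha
      · exact hvA
      · exact hsA ha
    exact hv (this ▸ Set.mem_insert v s)
  · rintro ⟨hsA, hi, hdom⟩
    refine ⟨hsA, hi, fun t htA hti hst => ?_⟩
    refine Set.Subset.antisymm hst (fun v hv => ?_)
    by_contra hvs
    obtain ⟨u, hu, hadj⟩ := hdom v (htA hv) hvs
    exact hti (hst hu) hv hadj

/-- Any independent subset of `A` extends to a maximal independent set of the
subgraph induced on `A`. -/
lemma aux_exists_maxIndepOn [Fintype V] (G : SimpleGraph V) {A s : Set V}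
    (hsA : s ⊆ A) (hs : IsIndep G s) : ∃ t, MaxIndepOn G A t ∧ s ⊆ t := by
  classical
  set F : Set (Set V) := {t | s ⊆ t ∧ t ⊆ A ∧ IsIndep G t} with hF
  have hne : F.Nonempty := ⟨s, Set.Subset.rfl, hsA, hs⟩
  obtain ⟨t, htF, hmax⟩ : ∃ t ∈ F, ∀ t' ∈ F, t.ncard ≤ t'.ncard → t.ncard = t'.ncard := by
    obtain ⟨t, ht, hm⟩ := Set.Finite.exists_maximalFor Set.ncard F (Set.toFinite F) hne
    exact ⟨t, ht, fun t' h1 h2 => le_antisymm h2 (hm h1 h2)⟩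
  obtain ⟨hst, htA, hti⟩ := htF
  refine ⟨t, ?_, hst⟩
  rw [aux_maxIndepOn_iff]
  refine ⟨htA, hti, fun v hvA hv => ?_⟩
  by_contra hno
  push_neg at hno
  have hins : IsIndep G (insert v t) := by
    intro a ha b hb hadj
    rcases ha with rfl | ha
    · rcases hb with rfl | hb
      · exact (G.loopless.irrefl _) hadj
      · exact hno b hb hadj.symm
    · rcases hb with rfl | hb
      · exact hno a ha hadj
      · exact hti ha hb hadj
  have hmem : insert v t ∈ F := by
    refine ⟨hst.trans (Set.subset_insert _ _), ?_, hins⟩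
    intro a ha
    rcases ha with rfl | ha
    · exact hvA
    · exact htA ha
  have hcard : t.ncard ≤ (insert v t).ncard :=
    Set.ncard_le_ncard (Set.subset_insert _ _) (Set.toFinite _)
  have heq := hmax _ hmem hcard
  have : (insert v t).ncard = t.ncard + 1 := Set.ncard_insert_of_notMem hv (Set.toFinite _)
  omega

/-- An independent set together with a maximal independent set of the region it fails
to dominate forms a maximal independent set. -/
lemma aux_extend_maxIndep [Fintype V] {P Q : Set V} (hP : IsIndep G P)
    (hQ : MaxIndepOn G ((ClosedNbhd G P)ᶜ) Q) : MaxIndep G (P ∪ Q) := by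
  have hQsub : Q ⊆ (ClosedNbhd G P)ᶜ := hQ.1
  have hQi : IsIndep G Q := hQ.2.1
  have hQdom := (aux_maxIndepOn_iff.mp hQ).2.2
  rw [aux_maxIndep_iff]
  constructor
  · intro a ha b hb hadj
    rcases ha with ha | ha
    · rcases hb with hb | hb
      · exact hP ha hb hadj
      · exact (aux_notin_closedNbhd (hQsub hb)).2 a ha hadj
    · rcases hb with hb | hb
      · exact (aux_notin_closedNbhd (hQsub ha)).2 b hb hadj.symm
      · exact hQi ha hb hadj
  · intro v hv
    have hv1 : v ∉ P := fun h => hv (Set.mem_union_left _ h)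
    have hv2 : v ∉ Q := fun h => hv (Set.mem_union_right _ h)
    by_cases hvP : v ∈ ClosedNbhd G P
    · rcases hvP with hvP | ⟨u, hu, hadj⟩
      · exact absurd hvP hv1
      · exact ⟨u, Or.inl hu, hadj⟩
    · obtain ⟨u, hu, hadj⟩ := hQdom v hvP hv2
      exact ⟨u, Set.mem_union_right _ hu, hadj⟩

/-- Set-avoidance: in a graph with no isolatable vertex, any independent set `J` can be
extended to a maximal independent set avoiding any independent set `Z` disjoint from `J`. -/
lemma aux_set_avoid [Fintype V] (G : SimpleGraph V) (hni : ∀ x, ¬ Isolatable G x)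
    {J Z : Set V} (hJ : IsIndep G J) (hZ : IsIndep G Z) (hJZ : Disjoint J Z) :
    ∃ K, MaxIndep G K ∧ J ⊆ K ∧ Disjoint K Z := by
  classical
  set Rg : Set V := (ClosedNbhd G J)ᶜ \ Z with hRg
  obtain ⟨L, hL, -⟩ := aux_exists_maxIndepOn G (Set.empty_subset Rg) (fun a ha => (Set.notMem_empty a ha).elim)
  have hLsub : L ⊆ Rg := hL.1
  have hLi : IsIndep G L := hL.2.1
  have hLdom := (aux_maxIndepOn_iff.mp hL).2.2
  -- the set of vertices of Z not dominated by J ∪ L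
  set Z' : Set V := Z ∩ (ClosedNbhd G J)ᶜ ∩ (ClosedNbhd G L)ᶜ with hZ'
  have hZ'empty : Z' = ∅ := by
    by_contra hne
    obtain ⟨z, hz⟩ := Set.nonempty_iff_ne_empty.mpr hne
    obtain ⟨⟨hzZ, hzJ⟩, hzL⟩ := hz
    -- build an isolating set for z
    apply hni z
    refine ⟨J ∪ L ∪ (Z' \ {z}), ?_, ?_⟩
    · -- independence
      intro a ha b hb hadj
      have keyJL : ∀ c ∈ J ∪ L, ∀ d ∈ Z' \ {z}, ¬ G.Adj c d := by
        rintro c (hc | hc) d ⟨⟨⟨hdZ, hdJ⟩, hdL⟩, -⟩ hadj'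
        · exact (aux_notin_closedNbhd hdJ).2 c hc hadj'
        · exact (aux_notin_closedNbhd hdL).2 c hc hadj'
      have keyJ_L : ∀ c ∈ J, ∀ d ∈ L, ¬ G.Adj c d := by
        intro c hc d hd hadj'
        exact (aux_notin_closedNbhd ((hLsub hd).1)).2 c hc hadj'
      rcases ha with (ha | ha) | ha
      · rcases hb with (hb | hb) | hb
        · exact hJ ha hb hadj
        · exact keyJ_L a ha b hb hadj
        · exact keyJL a (Or.inl ha) b hb hadj
      · rcases hb with (hb | hb) | hb
        · exact keyJ_L b hb a ha hadj.symm
        · exact hLi ha hb hadj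
        · exact keyJL a (Or.inr ha) b hb hadj
      · rcases hb with (hb | hb) | hb
        · exact keyJL b (Or.inl hb) a ha hadj.symm
        · exact keyJL b (Or.inr hb) a ha hadj.symm
        · exact hZ ha.1.1.1 hb.1.1.1 hadj
    · -- complement of closed neighborhood is {z}
      ext v
      simp only [Set.mem_compl_iff, Set.mem_singleton_iff]
      constructor
      · intro hv
        obtain ⟨hvmem, hvadj⟩ := aux_notin_closedNbhd hv
        by_contra hvz
        have hvJc : v ∈ (ClosedNbhd G J)ᶜ := by
          intro hvJ
          rcases hvJ with hvJ | ⟨u, hu, hadj⟩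
          · exact hvmem (Or.inl (Or.inl hvJ))
          · exact hvadj u (Or.inl (Or.inl hu)) hadj
        by_cases hvZ : v ∈ Z
        · have hvLc : v ∈ (ClosedNbhd G L)ᶜ := by
            intro hvL
            rcases hvL with hvL | ⟨u, hu, hadj⟩
            · exact hvmem (Or.inl (Or.inr hvL))
            · exact hvadj u (Or.inl (Or.inr hu)) hadj
          have : v ∈ Z' \ {z} := ⟨⟨⟨hvZ, hvJc⟩, hvLc⟩, hvz⟩
          exact hvmem (Or.inr this)
        · have hvRg : v ∈ Rg := ⟨hvJc, hvZ⟩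
          have hvL : v ∉ L := fun hvL => hvmem (Or.inl (Or.inr hvL))
          obtain ⟨u, hu, hadj⟩ := hLdom v hvRg hvL
          exact hvadj u (Or.inl (Or.inr hu)) hadj
      · rintro rfl
        intro hmem
        rcases hmem with (hmem | ⟨u, hu, hadj⟩)
        · rcases hmem with (hmem | hmem) | hmem
          · exact (Set.disjoint_right.mp hJZ hzZ) hmem
          · exact (hLsub hmem).2 hzZ
          · exact hmem.2 rfl
        · rcases hu with (hu | hu) | hu
          · exact (aux_notin_closedNbhd hzJ).2 u hu hadj
          · exact (aux_notin_closedNbhd hzL).2 u hu hadj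
          · exact hZ hu.1.1.1 hzZ hadj
  -- now J ∪ L is the required maximal independent set
  refine ⟨J ∪ L, ?_, Set.subset_union_left, ?_⟩
  · rw [aux_maxIndep_iff]
    constructor
    · intro a ha b hb hadj
      rcases ha with ha | ha
      · rcases hb with hb | hb
        · exact hJ ha hb hadj
        · exact (aux_notin_closedNbhd ((hLsub hb).1)).2 a ha hadj
      · rcases hb with hb | hb
        · exact (aux_notin_closedNbhd ((hLsub ha).1)).2 b hb hadj.symm
        · exact hLi ha hb hadj
    · intro v hv
      have hv1 : v ∉ J := fun h => hv (Set.mem_union_left _ h)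
      have hv2 : v ∉ L := fun h => hv (Set.mem_union_right _ h)
      by_cases hvJ : v ∈ ClosedNbhd G J
      · rcases hvJ with hvJ | ⟨u, hu, hadj⟩
        · exact absurd hvJ hv1
        · exact ⟨u, Or.inl hu, hadj⟩
      · by_cases hvZ : v ∈ Z
        · by_cases hvL : v ∈ ClosedNbhd G L
          · rcases hvL with hvL | ⟨u, hu, hadj⟩
            · exact absurd hvL hv2
            · exact ⟨u, Or.inr hu, hadj⟩
          · exfalso
            have : v ∈ Z' := ⟨⟨hvZ, hvJ⟩, hvL⟩
            rw [hZ'empty] at this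
            exact this
        · obtain ⟨u, hu, hadj⟩ := hLdom v ⟨hvJ, hvZ⟩ hv2
          exact ⟨u, Set.mem_union_right _ hu, hadj⟩
  · rw [Set.disjoint_union_left]
    exact ⟨hJZ, Set.disjoint_left.mpr (fun a ha => (hLsub ha).2)⟩

/-- In a graph with no isolatable vertex that is not well-covered, there are two
disjoint maximal independent sets of different cardinalities. -/
lemma aux_exists_disjoint_unequal [Fintype V] (G : SimpleGraph V)
    (hni : ∀ x, ¬ Isolatable G x) (hnwc : ¬ WellCovered G) :
    ∃ A B : Set V, MaxIndep G A ∧ MaxIndep G B ∧ Disjoint A B ∧ A.ncard ≠ B.ncard := by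
  classical
  by_contra hcon
  push_neg at hcon
  -- hcon : ∀ A B, MaxIndep G A → MaxIndep G B → Disjoint A B → A.ncard = B.ncard
  unfold WellCovered at hnwc
  push_neg at hnwc
  obtain ⟨A₀, B₀, hA₀, hB₀, hne₀⟩ := hnwc
  set D : Set ℕ := {n | ∃ A B : Set V, MaxIndep G A ∧ MaxIndep G B ∧
      A.ncard ≠ B.ncard ∧ (A ∩ B).ncard = n} with hD
  have hDne : D.Nonempty := ⟨(A₀ ∩ B₀).ncard, A₀, B₀, hA₀, hB₀, hne₀, rfl⟩
  obtain ⟨A, B, hA, hB, hab, hd⟩ := Nat.sInf_mem hDne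
  set d := sInf D with hdd
  have hd1 : 1 ≤ d := by
    rcases Nat.eq_zero_or_pos d with h0 | h1
    · exfalso
      rw [h0] at hd
      have : A ∩ B = ∅ := (Set.ncard_eq_zero (Set.toFinite _)).mp hd
      exact hab (hcon A B hA hB (Set.disjoint_iff_inter_eq_empty.mpr this))
    · exact h1
  obtain ⟨d₀, hd₀⟩ := Set.nonempty_of_ncard_ne_zero (by omega : (A ∩ B).ncard ≠ 0)
  -- the asymmetric construction: given maximal X Y with d₀ ∈ X ∩ Y, produce C maximal
  -- with C ⊇ Y \ {d₀}, C ∩ X = (X ∩ Y) \ {d₀}, d₀ ∉ C, C ∩ Y = Y \ {d₀}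
  have main : ∀ X Y : Set V, MaxIndep G X → MaxIndep G Y → X.ncard ≠ Y.ncard →
      (X ∩ Y).ncard = d → d₀ ∈ X → d₀ ∈ Y → Y.ncard + 1 ≤ X.ncard := by
    intro X Y hX hY hXY hdXY hd₀X hd₀Y
    -- avoid Z := (X \ Y) ∪ {d₀}, extend J := Y \ {d₀}
    have hJ : IsIndep G (Y \ {d₀}) := aux_indep_mono hY.1 Set.diff_subset
    have hZsub : (X \ Y) ∪ {d₀} ⊆ X := by
      rintro v (hv | hv)
      · exact hv.1
      · rw [Set.mem_singleton_iff] at hv; exact hv ▸ hd₀X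
    have hZ : IsIndep G ((X \ Y) ∪ {d₀}) := aux_indep_mono hX.1 hZsub
    have hJZ : Disjoint (Y \ {d₀}) ((X \ Y) ∪ {d₀}) := by
      rw [Set.disjoint_union_right]
      constructor
      · exact Set.disjoint_left.mpr (fun _ hv hv' => hv'.2 hv.1)
      · exact Set.disjoint_singleton_right.mpr (fun h => h.2 rfl)
    obtain ⟨C, hC, hJC, hCZ⟩ := aux_set_avoid G hni hJ hZ hJZ
    have hd₀Z : d₀ ∈ X \ Y ∪ {d₀} := Set.mem_union_right _ rfl
    have hd₀C : d₀ ∉ C := fun h => Set.disjoint_left.mp hCZ h hd₀Z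
    have hCXY : C ∩ X ⊆ (X ∩ Y) \ {d₀} := by
      rintro v ⟨hvC, hvX⟩
      have hvXY : v ∈ Y := by
        by_contra hvY
        have hmem : v ∈ X \ Y ∪ {d₀} := Set.mem_union_left _ (⟨hvX, hvY⟩ : v ∈ X \ Y)
        exact Set.disjoint_left.mp hCZ hvC hmem
      have hvd₀ : v ≠ d₀ := fun h => hd₀C (h ▸ hvC)
      exact ⟨⟨hvX, hvXY⟩, hvd₀⟩
    have hCXY' : (X ∩ Y) \ {d₀} ⊆ C ∩ X := by
      rintro v ⟨⟨hvX, hvY⟩, hvd₀⟩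
      have hmem : v ∈ Y \ {d₀} := ⟨hvY, hvd₀⟩
      exact Set.mem_inter (hJC hmem) hvX
    have hCX : C ∩ X = (X ∩ Y) \ {d₀} := Set.Subset.antisymm hCXY hCXY'
    -- (C ∩ X).ncard = d - 1 < d, so by minimality C.ncard = X.ncard
    have hcard1 : (C ∩ X).ncard + 1 = d := by
      rw [hCX]
      rw [Set.ncard_diff_singleton_add_one (Set.mem_inter hd₀X hd₀Y) (Set.toFinite _)]
      exact hdXY
    have hCXcard : C.ncard = X.ncard := by
      by_contra hne
      have : (C ∩ X).ncard ∈ D := ⟨C, X, hC, hX, hne, rfl⟩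
      have := Nat.sInf_le this
      omega
    -- C ∩ Y = Y \ {d₀}
    have hCY : C ∩ Y = Y \ {d₀} := by
      apply Set.Subset.antisymm
      · rintro v ⟨hvC, hvY⟩
        exact ⟨hvY, fun h => hd₀C (h ▸ hvC)⟩
      · intro v hv
        exact ⟨hJC hv, hv.1⟩
    -- C = (C ∩ Y) ∪ (C \ Y) and C \ Y is nonempty with ≥ 2 elements forced
    have hsplit : C.ncard = (C ∩ Y).ncard + (C \ Y).ncard := by
      rw [← Set.ncard_union_eq (Set.disjoint_left.mpr (fun _ hv hv' => hv'.2 hv.2))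
        (Set.toFinite _) (Set.toFinite _)]
      congr 1
      rw [Set.inter_union_diff]
    have hYcard : (C ∩ Y).ncard + 1 = Y.ncard := by
      rw [hCY]
      exact Set.ncard_diff_singleton_add_one hd₀Y (Set.toFinite _)
    have hCdY : C \ Y ≠ ∅ := by
      intro hempty
      have hCsub : C ⊆ Y := by
        intro v hv
        by_contra hvY
        have hmem : v ∈ C \ Y := ⟨hv, hvY⟩
        rw [hempty] at hmem
        exact hmem
      have := hC.2 Y hY.1 hCsub
      exact hd₀C (this ▸ hd₀Y)
    have hk1 : 1 ≤ (C \ Y).ncard := by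
      rcases Nat.eq_zero_or_pos (C \ Y).ncard with h0 | h1
      · exact absurd ((Set.ncard_eq_zero (Set.toFinite _)).mp h0) hCdY
      · exact h1
    have hkne1 : (C \ Y).ncard ≠ 1 := by
      intro h1
      -- then C.ncard = Y.ncard, but C.ncard = X.ncard ≠ Y.ncard
      have : C.ncard + 1 = Y.ncard + 1 := by omega
      omega
    omega
  -- apply `main` in both directions
  have h1 := main A B hA hB hab hd hd₀.1 hd₀.2
  have h2 := main B A hB hA (fun h => hab h.symm) (by rw [Set.inter_comm]; exact hd) hd₀.2 hd₀.1
  omega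

end Aux

/-! ### Product constructions -/

section Product

variable {V W : Type*} [Fintype V] [Fintype W] {G : SimpleGraph V} {H : SimpleGraph W}

lemma aux_ncard_sprod (s : Set V) (t : Set W) : (s ×ˢ t).ncard = s.ncard * t.ncard := by
  rw [← Nat.card_coe_set_eq, ← Nat.card_coe_set_eq, ← Nat.card_coe_set_eq]
  rw [Nat.card_congr (Equiv.Set.prod s t), Nat.card_prod]

lemma aux_sprod_indep {A : Set V} {T : Set W} (hA : IsIndep G A) (hT : IsIndep H T) :
    IsIndep (G.boxProd H) (A ×ˢ T) := by
  rintro ⟨a1, a2⟩ ⟨ha1, ha2⟩ ⟨b1, b2⟩ ⟨hb1, hb2⟩ hadj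
  rw [SimpleGraph.boxProd_adj] at hadj
  rcases hadj with ⟨hadj, -⟩ | ⟨hadj, -⟩
  · exact hA ha1 hb1 hadj
  · exact hT ha2 hb2 hadj

/-- The 2×2 block-swap construction: if both `G` and `H` have disjoint maximal
independent sets of different sizes, the box product is not well-covered. -/
lemma aux_eq1 {A A' : Set V} {T T' : Set W}
    (hA : MaxIndep G A) (hA' : MaxIndep G A') (hAA' : Disjoint A A')
    (hT : MaxIndep H T) (hT' : MaxIndep H T') (hTT' : Disjoint T T')
    (ha : A.ncard ≠ A'.ncard) (ht : T.ncard ≠ T'.ncard) :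
    ¬ WellCovered (G.boxProd H) := by
  classical
  intro hwc
  set GH := G.boxProd H with hGHdef
  have hAdom := (aux_maxIndep_iff.mp hA).2
  have hA'dom := (aux_maxIndep_iff.mp hA').2
  have hTdom := (aux_maxIndep_iff.mp hT).2
  have hT'dom := (aux_maxIndep_iff.mp hT').2
  -- the two frames
  set P : Set (V × W) := (A ×ˢ T) ∪ (A' ×ˢ T') with hPdef
  set Px : Set (V × W) := (A ×ˢ T') ∪ (A' ×ˢ T) with hPxdef
  set R : Set (V × W) := (A ∪ A')ᶜ ×ˢ (T ∪ T')ᶜ with hRdef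
  -- independence of the frames
  have hPindep : ∀ (X : Set V) (X' : Set V) (Y : Set W) (Y' : Set W),
      IsIndep G X → IsIndep G X' → IsIndep H Y → IsIndep H Y' → Disjoint X X' → Disjoint Y Y' →
      IsIndep GH ((X ×ˢ Y) ∪ (X' ×ˢ Y')) := by
    intro X X' Y Y' hX hX' hY hY' hXX' hYY'
    intro a ha b hb hadj
    have hadj' : (G.Adj a.1 b.1 ∧ a.2 = b.2) ∨ (H.Adj a.2 b.2 ∧ a.1 = b.1) :=
      SimpleGraph.boxProd_adj.mp hadj
    rcases ha with ⟨ha1, ha2⟩ | ⟨ha1, ha2⟩ <;> rcases hb with ⟨hb1, hb2⟩ | ⟨hb1, hb2⟩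
    · rcases hadj' with ⟨h, -⟩ | ⟨h, -⟩
      · exact hX ha1 hb1 h
      · exact hY ha2 hb2 h
    · rcases hadj' with ⟨-, h⟩ | ⟨-, h⟩
      · exact Set.disjoint_left.mp hYY' ha2 (by rwa [h])
      · exact Set.disjoint_left.mp hXX' ha1 (by rwa [h])
    · rcases hadj' with ⟨-, h⟩ | ⟨-, h⟩
      · exact Set.disjoint_left.mp hYY' hb2 (by rwa [← h])
      · exact Set.disjoint_left.mp hXX' hb1 (by rwa [← h])
    · rcases hadj' with ⟨h, -⟩ | ⟨h, -⟩
      · exact hX' ha1 hb1 h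
      · exact hY' ha2 hb2 h
  have hPi : IsIndep GH P := hPindep A A' T T' hA.1 hA'.1 hT.1 hT'.1 hAA' hTT'
  have hPxi : IsIndep GH Px := by
    have := hPindep A A' T' T hA.1 hA'.1 hT'.1 hT.1 hAA' hTT'.symm
    exact this
  -- the undominated regions
  have hreg : ∀ (Y : Set W) (Y' : Set W), MaxIndep H Y → MaxIndep H Y' →
      (ClosedNbhd GH ((A ×ˢ Y) ∪ (A' ×ˢ Y')))ᶜ = (A ∪ A')ᶜ ×ˢ (Y ∪ Y')ᶜ := by
    intro Y Y' hY hY'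
    have hYdom := (aux_maxIndep_iff.mp hY).2
    have hY'dom := (aux_maxIndep_iff.mp hY').2
    ext ⟨v, w⟩
    simp only [Set.mem_compl_iff, Set.mem_prod, Set.mem_union]
    constructor
    · intro hv
      obtain ⟨hvmem, hvadj⟩ := aux_notin_closedNbhd hv
      constructor
      · rintro (hvA | hvA')
        · by_cases hwY : w ∈ Y
          · exact hvmem (Or.inl ⟨hvA, hwY⟩)
          · obtain ⟨u, hu, hadj⟩ := hYdom w hwY
            exact hvadj (v, u) (Or.inl ⟨hvA, hu⟩)
              (SimpleGraph.boxProd_adj.mpr (Or.inr ⟨hadj, rfl⟩))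
        · by_cases hwY' : w ∈ Y'
          · exact hvmem (Or.inr ⟨hvA', hwY'⟩)
          · obtain ⟨u, hu, hadj⟩ := hY'dom w hwY'
            exact hvadj (v, u) (Or.inr ⟨hvA', hu⟩)
              (SimpleGraph.boxProd_adj.mpr (Or.inr ⟨hadj, rfl⟩))
      · rintro (hwY | hwY')
        · by_cases hvA : v ∈ A
          · exact hvmem (Or.inl ⟨hvA, hwY⟩)
          · obtain ⟨u, hu, hadj⟩ := hAdom v hvA
            exact hvadj (u, w) (Or.inl ⟨hu, hwY⟩)
              (SimpleGraph.boxProd_adj.mpr (Or.inl ⟨hadj, rfl⟩))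
        · by_cases hvA' : v ∈ A'
          · exact hvmem (Or.inr ⟨hvA', hwY'⟩)
          · obtain ⟨u, hu, hadj⟩ := hA'dom v hvA'
            exact hvadj (u, w) (Or.inr ⟨hu, hwY'⟩)
              (SimpleGraph.boxProd_adj.mpr (Or.inl ⟨hadj, rfl⟩))
    · rintro ⟨hvAA', hwYY'⟩
      rintro (hmem | ⟨⟨u1, u2⟩, hu, hadj⟩)
      · rcases hmem with ⟨h1, h2⟩ | ⟨h1, h2⟩
        · exact hvAA' (Or.inl h1)
        · exact hvAA' (Or.inr h1)
      · rw [SimpleGraph.boxProd_adj] at hadj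
        simp only [] at hadj
        rcases hadj with ⟨-, h2⟩ | ⟨-, h1⟩
        · rcases hu with ⟨-, hu2⟩ | ⟨-, hu2⟩
          · exact hwYY' (Or.inl (h2 ▸ hu2))
          · exact hwYY' (Or.inr (h2 ▸ hu2))
        · rcases hu with ⟨hu1, -⟩ | ⟨hu1, -⟩
          · exact hvAA' (Or.inl (h1 ▸ hu1))
          · exact hvAA' (Or.inr (h1 ▸ hu1))
  have hregP : (ClosedNbhd GH P)ᶜ = R := hreg T T' hT hT'
  have hregPx : (ClosedNbhd GH Px)ᶜ = R := by
    rw [hreg T' T hT' hT, hRdef, Set.union_comm T' T]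
  -- a maximal independent set of the common region
  obtain ⟨Q, hQ, -⟩ := aux_exists_maxIndepOn GH (Set.empty_subset R) (fun a ha => (Set.notMem_empty a ha).elim)
  have hI : MaxIndep GH (P ∪ Q) := aux_extend_maxIndep hPi (hregP ▸ hQ)
  have hIx : MaxIndep GH (Px ∪ Q) := aux_extend_maxIndep hPxi (hregPx ▸ hQ)
  -- cardinalities
  have hQsub : Q ⊆ R := hQ.1
  have hQdisj : ∀ (S : Set (V × W)), (ClosedNbhd GH S)ᶜ = R → Disjoint S Q := by
    intro S hS
    refine Set.disjoint_left.mpr (fun a ha hQa => ?_)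
    have : a ∈ (ClosedNbhd GH S)ᶜ := hS ▸ hQsub hQa
    exact this (Or.inl ha)
  have hblocks : ∀ (X X' : Set V) (Y Y' : Set W), Disjoint X X' →
      ((X ×ˢ Y) ∪ (X' ×ˢ Y')).ncard = X.ncard * Y.ncard + X'.ncard * Y'.ncard := by
    intro X X' Y Y' hXX'
    rw [Set.ncard_union_eq ?_ (Set.toFinite _) (Set.toFinite _)]
    · rw [aux_ncard_sprod, aux_ncard_sprod]
    · refine Set.disjoint_left.mpr ?_
      rintro ⟨a1, a2⟩ ⟨h1, -⟩ ⟨h1', -⟩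
      exact Set.disjoint_left.mp hXX' h1 h1'
  have hcardI : (P ∪ Q).ncard = A.ncard * T.ncard + A'.ncard * T'.ncard + Q.ncard := by
    rw [Set.ncard_union_eq (hQdisj P hregP) (Set.toFinite _) (Set.toFinite _),
      hblocks A A' T T' hAA']
  have hcardIx : (Px ∪ Q).ncard = A.ncard * T'.ncard + A'.ncard * T.ncard + Q.ncard := by
    rw [Set.ncard_union_eq (hQdisj Px hregPx) (Set.toFinite _) (Set.toFinite _),
      hblocks A A' T' T hAA']
  have heq := hwc _ _ hI hIx
  rw [hcardI, hcardIx] at heq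
  -- contradiction: (a - a')(t - t') ≠ 0
  set a := A.ncard; set a' := A'.ncard; set t := T.ncard; set t' := T'.ncard
  have heq' : a * t + a' * t' = a * t' + a' * t := by omega
  have hz : ((a : ℤ) - a') * ((t : ℤ) - t') = 0 := by
    have hc : (a : ℤ) * t + a' * t' = a * t' + a' * t := by exact_mod_cast heq'
    linear_combination hc
  rcases mul_eq_zero.mp hz with h | h
  · exact ha (by exact_mod_cast sub_eq_zero.mp h)
  · exact ht (by exact_mod_cast sub_eq_zero.mp h)

/-- The isolatable-vertex construction: if `G` has an isolatable vertex and `H` has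
maximal independent sets of different sizes, the box product is not well-covered. -/
lemma aux_isolatable_left {x : V} (hx : Isolatable G x) {T1 T2 : Set W}
    (hT1 : MaxIndep H T1) (hT2 : MaxIndep H T2) (ht : T1.ncard < T2.ncard) :
    ¬ WellCovered (G.boxProd H) := by
  classical
  intro hwc
  set GH := G.boxProd H with hGHdef
  obtain ⟨M, hM, hMx⟩ := hx
  have hxM : x ∉ ClosedNbhd G M := by
    have : x ∈ (ClosedNbhd G M)ᶜ := by rw [hMx]; rfl
    exact this
  obtain ⟨hxM', hxMadj⟩ := aux_notin_closedNbhd hxM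
  have hdomM : ∀ v : V, v ≠ x → v ∈ ClosedNbhd G M := by
    intro v hv
    by_contra hvc
    have : v ∈ (ClosedNbhd G M)ᶜ := hvc
    rw [hMx] at this
    exact hv this
  have hT1dom := (aux_maxIndep_iff.mp hT1).2
  have hT2dom := (aux_maxIndep_iff.mp hT2).2
  -- A := insert x M is a maximal independent set of G
  have hAi : IsIndep G (insert x M) := by
    intro a ha b hb hadj
    rcases ha with rfl | ha
    · rcases hb with rfl | hb
      · exact (G.loopless.irrefl _) hadj
      · exact hxMadj b hb hadj.symm
    · rcases hb with rfl | hb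
      · exact hxMadj a ha hadj
      · exact hM ha hb hadj
  have hAmax : MaxIndep G (insert x M) := by
    rw [aux_maxIndep_iff]
    refine ⟨hAi, fun v hv => ?_⟩
    have hvx : v ≠ x := fun h => hv (h ▸ Set.mem_insert x M)
    rcases hdomM v hvx with hvM | ⟨u, hu, hadj⟩
    · exact absurd (Set.mem_insert_of_mem x hvM) hv
    · exact ⟨u, Set.mem_insert_of_mem x hu, hadj⟩
  -- the two frames
  set P1 : Set (V × W) := (M ×ˢ T2) ∪ ({x} ×ˢ T1) with hP1def
  set P2 : Set (V × W) := (insert x M) ×ˢ T2 with hP2def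
  set U1 : Set (V × W) :=
    {p | p.1 ∉ M ∧ p.1 ≠ x ∧ p.2 ∉ T2 ∧ ¬(G.Adj x p.1 ∧ p.2 ∈ T1)} with hU1def
  set U2 : Set (V × W) := (insert x M)ᶜ ×ˢ T2ᶜ with hU2def
  have hU1subU2 : U1 ⊆ U2 := by
    rintro ⟨v, w⟩ ⟨h1, h2, h3, -⟩
    refine ⟨?_, h3⟩
    intro hmem
    rcases hmem with rfl | hmem
    · exact h2 rfl
    · exact h1 hmem
  -- independence of P1
  have hP1i : IsIndep GH P1 := by
    rintro ⟨a1, a2⟩ ha ⟨b1, b2⟩ hb hadj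
    have hadj2 : (G.Adj a1 b1 ∧ a2 = b2) ∨ (H.Adj a2 b2 ∧ a1 = b1) :=
      SimpleGraph.boxProd_adj.mp hadj
    rcases ha with ⟨ha1, ha2⟩ | ⟨ha1, ha2⟩ <;> rcases hb with ⟨hb1, hb2⟩ | ⟨hb1, hb2⟩
    · rcases hadj2 with ⟨h, -⟩ | ⟨h, -⟩
      · exact hM ha1 hb1 h
      · exact hT2.1 ha2 hb2 h
    · have hb1' : b1 = x := hb1
      rcases hadj2 with ⟨h, -⟩ | ⟨-, h⟩
      · exact hxMadj a1 ha1 (hb1' ▸ h)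
      · exact hxM' (hb1' ▸ h ▸ ha1)
    · have ha1' : a1 = x := ha1
      rcases hadj2 with ⟨h, -⟩ | ⟨-, h⟩
      · exact hxMadj b1 hb1 (ha1' ▸ h.symm)
      · exact hxM' (ha1' ▸ h.symm ▸ hb1)
    · have ha1' : a1 = x := ha1
      have hb1' : b1 = x := hb1
      rcases hadj2 with ⟨h, -⟩ | ⟨h, -⟩
      · rw [ha1', hb1'] at h
        exact (G.loopless.irrefl x) h
      · exact hT1.1 ha2 hb2 h
  -- the undominated region of P1 is U1
  have hregP1 : (ClosedNbhd GH P1)ᶜ = U1 := by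
    ext ⟨v, w⟩
    simp only [Set.mem_compl_iff, hU1def, Set.mem_setOf_eq]
    constructor
    · intro hv
      obtain ⟨hvmem, hvadj⟩ := aux_notin_closedNbhd hv
      refine ⟨?_, ?_, ?_, ?_⟩
      · intro hvM
        by_cases hwT2 : w ∈ T2
        · exact hvmem (Or.inl ⟨hvM, hwT2⟩)
        · obtain ⟨u, hu, hadj⟩ := hT2dom w hwT2
          exact hvadj (v, u) (Or.inl ⟨hvM, hu⟩)
            (SimpleGraph.boxProd_adj.mpr (Or.inr ⟨hadj, rfl⟩))
      · rintro rfl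
        by_cases hwT1 : w ∈ T1
        · exact hvmem (Or.inr ⟨rfl, hwT1⟩)
        · obtain ⟨u, hu, hadj⟩ := hT1dom w hwT1
          exact hvadj (v, u) (Or.inr ⟨rfl, hu⟩)
            (SimpleGraph.boxProd_adj.mpr (Or.inr ⟨hadj, rfl⟩))
      · intro hwT2
        have hvx : v ≠ x := by
          rintro rfl
          by_cases hwT1 : w ∈ T1
          · exact hvmem (Or.inr ⟨rfl, hwT1⟩)
          · obtain ⟨u, hu, hadj⟩ := hT1dom w hwT1
            exact hvadj (v, u) (Or.inr ⟨rfl, hu⟩)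
              (SimpleGraph.boxProd_adj.mpr (Or.inr ⟨hadj, rfl⟩))
        rcases hdomM v hvx with hvM | ⟨u, hu, hadj⟩
        · exact hvmem (Or.inl ⟨hvM, hwT2⟩)
        · exact hvadj (u, w) (Or.inl ⟨hu, hwT2⟩)
            (SimpleGraph.boxProd_adj.mpr (Or.inl ⟨hadj, rfl⟩))
      · rintro ⟨hadj, hwT1⟩
        exact hvadj (x, w) (Or.inr ⟨rfl, hwT1⟩)
          (SimpleGraph.boxProd_adj.mpr (Or.inl ⟨hadj, rfl⟩))
    · rintro ⟨h1, h2, h3, h4⟩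
      rintro (hmem | ⟨⟨u1, u2⟩, hu, hadj⟩)
      · rcases hmem with ⟨hm, -⟩ | ⟨hm, -⟩
        · exact h1 hm
        · exact h2 (Set.mem_singleton_iff.mp hm)
      · rw [SimpleGraph.boxProd_adj] at hadj
        simp only [] at hadj
        rcases hu with ⟨hu1, hu2⟩ | ⟨hu1, hu2⟩
        · rcases hadj with ⟨hga, heq⟩ | ⟨hha, heq⟩
          · exact h3 (heq ▸ hu2)
          · exact h1 (heq ▸ hu1)
        · rw [Set.mem_singleton_iff] at hu1
          rcases hadj with ⟨hga, heq⟩ | ⟨hha, heq⟩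
          · exact h4 ⟨hu1 ▸ hga, heq ▸ hu2⟩
          · exact h2 (heq ▸ hu1)
  -- the undominated region of P2 is U2
  have hregP2 : (ClosedNbhd GH P2)ᶜ = U2 := by
    have hAdom := (aux_maxIndep_iff.mp hAmax).2
    ext ⟨v, w⟩
    simp only [Set.mem_compl_iff, hU2def, Set.mem_prod]
    constructor
    · intro hv
      obtain ⟨hvmem, hvadj⟩ := aux_notin_closedNbhd hv
      constructor
      · intro hvA
        by_cases hwT2 : w ∈ T2
        · exact hvmem ⟨hvA, hwT2⟩
        · obtain ⟨u, hu, hadj⟩ := hT2dom w hwT2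
          exact hvadj (v, u) ⟨hvA, hu⟩
            (SimpleGraph.boxProd_adj.mpr (Or.inr ⟨hadj, rfl⟩))
      · intro hwT2
        by_cases hvA : v ∈ insert x M
        · exact hvmem ⟨hvA, hwT2⟩
        · obtain ⟨u, hu, hadj⟩ := hAdom v hvA
          exact hvadj (u, w) ⟨hu, hwT2⟩
            (SimpleGraph.boxProd_adj.mpr (Or.inl ⟨hadj, rfl⟩))
    · rintro ⟨h1, h2⟩
      rintro (⟨hm1, hm2⟩ | ⟨⟨u1, u2⟩, ⟨hu1, hu2⟩, hadj⟩)
      · exact h1 hm1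
      · rw [SimpleGraph.boxProd_adj] at hadj
        simp only [] at hadj
        rcases hadj with ⟨-, heq⟩ | ⟨-, heq⟩
        · exact h2 (heq ▸ hu2)
        · exact h1 (heq ▸ hu1)
  -- maximal independent sets of the regions, nested
  obtain ⟨Q, hQ, -⟩ := aux_exists_maxIndepOn GH (Set.empty_subset U1) (fun a ha => (Set.notMem_empty a ha).elim)
  have hQindep : IsIndep GH Q := hQ.2.1
  have hQsubU2 : Q ⊆ U2 := hQ.1.trans hU1subU2
  obtain ⟨Qh, hQh, hQQh⟩ := aux_exists_maxIndepOn GH hQsubU2 hQindep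
  -- the two maximal independent sets of the product
  have hI1 : MaxIndep GH (P1 ∪ Q) := aux_extend_maxIndep hP1i (hregP1 ▸ hQ)
  have hP2i : IsIndep GH P2 := aux_sprod_indep hAi hT2.1
  have hI2 : MaxIndep GH (P2 ∪ Qh) := aux_extend_maxIndep hP2i (hregP2 ▸ hQh)
  -- cardinalities
  have hxMnot : x ∉ M := hxM'
  have hP1card : P1.ncard = M.ncard * T2.ncard + T1.ncard := by
    rw [Set.ncard_union_eq ?_ (Set.toFinite _) (Set.toFinite _)]
    · rw [aux_ncard_sprod, aux_ncard_sprod, Set.ncard_singleton, one_mul]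
    · refine Set.disjoint_left.mpr ?_
      rintro ⟨a1, a2⟩ ⟨h1, -⟩ ⟨h1', -⟩
      rw [Set.mem_singleton_iff] at h1'
      exact hxMnot (h1' ▸ h1)
  have hP2card : P2.ncard = (M.ncard + 1) * T2.ncard := by
    rw [hP2def, aux_ncard_sprod, Set.ncard_insert_of_notMem hxMnot (Set.toFinite _)]
  have hdisj1 : Disjoint P1 Q := by
    refine Set.disjoint_left.mpr (fun a ha hQa => ?_)
    have : a ∈ (ClosedNbhd GH P1)ᶜ := hregP1 ▸ hQ.1 hQa
    exact this (Or.inl ha)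
  have hdisj2 : Disjoint P2 Qh := by
    refine Set.disjoint_left.mpr (fun a ha hQa => ?_)
    have : a ∈ (ClosedNbhd GH P2)ᶜ := hregP2 ▸ hQh.1 hQa
    exact this (Or.inl ha)
  have hcard1 : (P1 ∪ Q).ncard = M.ncard * T2.ncard + T1.ncard + Q.ncard := by
    rw [Set.ncard_union_eq hdisj1 (Set.toFinite _) (Set.toFinite _), hP1card]
  have hcard2 : (P2 ∪ Qh).ncard = (M.ncard + 1) * T2.ncard + Qh.ncard := by
    rw [Set.ncard_union_eq hdisj2 (Set.toFinite _) (Set.toFinite _), hP2card]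
  have hQle : Q.ncard ≤ Qh.ncard := Set.ncard_le_ncard hQQh (Set.toFinite _)
  have heq := hwc _ _ hI1 hI2
  rw [hcard1, hcard2] at heq
  nlinarith [heq, hQle, ht]

/-- Transfer of well-coveredness along the swap isomorphism of box products. -/
lemma aux_wc_swap (hwc : WellCovered (G.boxProd H)) : WellCovered (H.boxProd G) := by
  intro s t hs ht
  have hswap : ∀ u : Set (W × V), MaxIndep (H.boxProd G) u →
      MaxIndep (G.boxProd H) (Prod.swap '' u) := by
    intro u hu
    rw [aux_maxIndep_iff] at hu ⊢
    obtain ⟨hui, hudom⟩ := hu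
    constructor
    · rintro a ⟨⟨a1, a2⟩, ha', rfl⟩ b ⟨⟨b1, b2⟩, hb', rfl⟩ hadj
      have hadj2 : (G.Adj a2 b2 ∧ a1 = b1) ∨ (H.Adj a1 b1 ∧ a2 = b2) :=
        SimpleGraph.boxProd_adj.mp hadj
      refine hui ha' hb' (SimpleGraph.boxProd_adj.mpr ?_)
      exact hadj2.elim (fun h => Or.inr ⟨h.1, h.2⟩) (fun h => Or.inl ⟨h.1, h.2⟩)
    · intro v hv
      have hvs : v.swap ∉ u := by
        intro h
        exact hv ⟨v.swap, h, Prod.swap_swap v⟩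
      obtain ⟨u', hu', hadj⟩ := hudom v.swap hvs
      have hadj2 : (H.Adj u'.1 v.2 ∧ u'.2 = v.1) ∨ (G.Adj u'.2 v.1 ∧ u'.1 = v.2) :=
        SimpleGraph.boxProd_adj.mp hadj
      refine ⟨u'.swap, ⟨u', hu', rfl⟩, SimpleGraph.boxProd_adj.mpr ?_⟩
      exact hadj2.elim (fun h => Or.inr ⟨h.1, h.2⟩) (fun h => Or.inl ⟨h.1, h.2⟩)
  have := hwc _ _ (hswap s hs) (hswap t ht)
  rwa [Set.ncard_image_of_injective _ Prod.swap_injective,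
    Set.ncard_image_of_injective _ Prod.swap_injective] at this

end Product

/-- If `G □ H` is well-covered, then at least one of `G` or `H` is well-covered. -/
theorem stmt_5 {V W : Type*} [Fintype V] [Fintype W]
    (G : SimpleGraph V) (H : SimpleGraph W)
    (hGH : WellCovered (G.boxProd H)) :
    WellCovered G ∨ WellCovered H := by
  classical
  by_contra hcon
  push_neg at hcon
  obtain ⟨hG, hH⟩ := hcon
  -- unequal maximal independent sets in both factors
  have hGpair : ∃ s t : Set V, MaxIndep G s ∧ MaxIndep G t ∧ s.ncard ≠ t.ncard := by
    unfold WellCovered at hG; push_neg at hG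
    obtain ⟨s, t, hs, ht, h⟩ := hG; exact ⟨s, t, hs, ht, h⟩
  have hHpair : ∃ s t : Set W, MaxIndep H s ∧ MaxIndep H t ∧ s.ncard ≠ t.ncard := by
    unfold WellCovered at hH; push_neg at hH
    obtain ⟨s, t, hs, ht, h⟩ := hH; exact ⟨s, t, hs, ht, h⟩
  by_cases hGiso : ∃ x, Isolatable G x
  · obtain ⟨x, hx⟩ := hGiso
    obtain ⟨T1, T2, hT1, hT2, hT⟩ := hHpair
    rcases Nat.lt_or_ge T1.ncard T2.ncard with hlt | hge
    · exact aux_isolatable_left hx hT1 hT2 hlt hGH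
    · have hlt : T2.ncard < T1.ncard := by omega
      exact aux_isolatable_left hx hT2 hT1 hlt hGH
  by_cases hHiso : ∃ y, Isolatable H y
  · obtain ⟨y, hy⟩ := hHiso
    obtain ⟨S1, S2, hS1, hS2, hS⟩ := hGpair
    have hwc' := aux_wc_swap hGH
    rcases Nat.lt_or_ge S1.ncard S2.ncard with hlt | hge
    · exact aux_isolatable_left hy hS1 hS2 hlt hwc'
    · have hlt : S2.ncard < S1.ncard := by omega
      exact aux_isolatable_left hy hS2 hS1 hlt hwc'
  · push_neg at hGiso hHiso
    obtain ⟨A, A', hA, hA', hAA', ha⟩ := aux_exists_disjoint_unequal G hGiso hG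
    obtain ⟨T, T', hT, hT', hTT', ht⟩ := aux_exists_disjoint_unequal H hHiso hH
    exact aux_eq1 hA hA' hAA' hT hT' hTT' ha ht hGH
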